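/- Let F be an algebraically closed field of characteristic different from 2 and let l ≥ 4. Then the normalizer of T̄ in SO_J is the internal semidirect product of T̄ by W̄; that is: W̄ is contained in N_{SO_J}(T̄), T̄ ∩ W̄ = {1}, and every element of N_{SO_J}(T̄) can be written as t·w with t ∈ T̄ and w ∈ W̄. -/

import Mathlib

open Matrix

noncomputable section

variable (n : ℕ) (F : Type) [Field F]

/-- The antidiagonal matrix `J`: entry `(i,j)` (1-based) is `1` iff `i + j = n + 1`. -/
def Jmat : Matrix (Fin n) (Fin n) F :=
  Matrix.of fun i j => if (i : ℕ) + (j : ℕ) + 1 = n then 1 else 0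

/-- The permutation `ι` of `{1,…,n}` given (1-based) by `i ↦ n + 1 - i`. -/
def iotaPerm : Equiv.Perm (Fin n) where
  toFun i := ⟨n - 1 - (i : ℕ), by have := i.isLt; omega⟩
  invFun i := ⟨n - 1 - (i : ℕ), by have := i.isLt; omega⟩
  left_inv i := by have := i.isLt; apply Fin.ext; show n - 1 - (n - 1 - (i : ℕ)) = _; omega
  right_inv i := by have := i.isLt; apply Fin.ext; show n - 1 - (n - 1 - (i : ℕ)) = _; omega

/-- The permutation matrix `P_σ`, with `(i,j)` entry `1` iff `i = σ j`. -/
def permMat (σ : Equiv.Perm (Fin n)) : Matrix (Fin n) (Fin n) F :=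
  Matrix.of fun i j => if i = σ j then 1 else 0

lemma permMat_mul (σ τ : Equiv.Perm (Fin n)) :
    permMat n F σ * permMat n F τ = permMat n F (σ * τ) := by
  ext i j
  simp only [permMat, Matrix.mul_apply, Matrix.of_apply]
  rw [Finset.sum_eq_single (τ j)]
  · simp [Equiv.Perm.mul_apply]; exact if_congr Iff.rfl rfl rfl
  · intro k _ hk; simp [hk]
  · intro h; simp at h

lemma permMat_one : permMat n F 1 = 1 := by
  ext i j
  simp [permMat, Matrix.one_apply]; exact if_congr Iff.rfl rfl rfl

/-- The permutation matrix `P_σ` as an element of `GL_n(F)`. -/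
def permGL (σ : Equiv.Perm (Fin n)) : GL (Fin n) F :=
  ⟨permMat n F σ, permMat n F σ⁻¹,
    by rw [permMat_mul]; simp [permMat_one],
    by rw [permMat_mul]; simp [permMat_one]⟩

/-- The orthogonal group `O_J = {x ∈ GL_n(F) : xᵀ J x = J}` as a subgroup of `GL_n(F)`. -/
def OJ : Subgroup (GL (Fin n) F) where
  carrier := {x | (x : Matrix (Fin n) (Fin n) F)ᵀ * Jmat n F * (x : Matrix (Fin n) (Fin n) F) = Jmat n F}
  one_mem' := by simp
  mul_mem' := by
    intro a b ha hb
    simp only [Set.mem_setOf_eq] at ha hb ⊢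
    rw [Units.val_mul, transpose_mul]
    calc (b : Matrix (Fin n) (Fin n) F)ᵀ * (a : Matrix (Fin n) (Fin n) F)ᵀ * Jmat n F *
          ((a : Matrix (Fin n) (Fin n) F) * (b : Matrix (Fin n) (Fin n) F))
        = (b : Matrix (Fin n) (Fin n) F)ᵀ *
            ((a : Matrix (Fin n) (Fin n) F)ᵀ * Jmat n F * (a : Matrix (Fin n) (Fin n) F)) *
            (b : Matrix (Fin n) (Fin n) F) := by noncomm_ring
      _ = Jmat n F := by rw [ha, hb]
  inv_mem' := by
    intro a ha
    simp only [Set.mem_setOf_eq] at ha ⊢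
    calc ((a⁻¹ : GL (Fin n) F) : Matrix (Fin n) (Fin n) F)ᵀ * Jmat n F *
          ((a⁻¹ : GL (Fin n) F) : Matrix (Fin n) (Fin n) F)
        = ((a⁻¹ : GL (Fin n) F) : Matrix (Fin n) (Fin n) F)ᵀ *
            ((a : Matrix (Fin n) (Fin n) F)ᵀ * Jmat n F * (a : Matrix (Fin n) (Fin n) F)) *
            ((a⁻¹ : GL (Fin n) F) : Matrix (Fin n) (Fin n) F) := by rw [ha]
      _ = ((a : Matrix (Fin n) (Fin n) F) * ((a⁻¹ : GL (Fin n) F) : Matrix (Fin n) (Fin n) F))ᵀ *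
            Jmat n F *
            ((a : Matrix (Fin n) (Fin n) F) * ((a⁻¹ : GL (Fin n) F) : Matrix (Fin n) (Fin n) F)) := by
          rw [transpose_mul]; noncomm_ring
      _ = Jmat n F := by rw [Units.mul_inv]; simp

/-- `SL_n(F)` viewed as a subgroup of `GL_n(F)`. -/
def SLgl : Subgroup (GL (Fin n) F) where
  carrier := {x | (x : Matrix (Fin n) (Fin n) F).det = 1}
  one_mem' := by simp
  mul_mem' := by
    intro a b ha hb
    simp only [Set.mem_setOf_eq] at ha hb ⊢
    rw [Units.val_mul, det_mul, ha, hb, one_mul]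
  inv_mem' := by
    intro a ha
    simp only [Set.mem_setOf_eq] at ha ⊢
    have h : ((a : Matrix (Fin n) (Fin n) F) * ((a⁻¹ : GL (Fin n) F) : Matrix (Fin n) (Fin n) F)).det = 1 := by
      rw [Units.mul_inv]; simp
    rw [det_mul, ha, one_mul] at h
    exact h

/-- `SO_J := O_J ∩ SL_n(F)`. -/
def SOJ : Subgroup (GL (Fin n) F) := OJ n F ⊓ SLgl n F

/-- The diagonal matrices lying in a subgroup `G` of `GL_n(F)` form a subgroup. -/
def diagIn (G : Subgroup (GL (Fin n) F)) : Subgroup (GL (Fin n) F) where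
  carrier := {x | x ∈ G ∧ (x : Matrix (Fin n) (Fin n) F).IsDiag}
  one_mem' := ⟨one_mem _, Matrix.isDiag_one⟩
  mul_mem' := by
    rintro a b ⟨haG, haD⟩ ⟨hbG, hbD⟩
    refine ⟨mul_mem haG hbG, ?_⟩
    rw [Units.val_mul, ← haD.diagonal_diag, ← hbD.diagonal_diag, diagonal_mul_diagonal]
    exact isDiag_diagonal _
  inv_mem' := by
    rintro a ⟨haG, haD⟩
    refine ⟨inv_mem haG, ?_⟩
    rw [Matrix.coe_units_inv, ← haD.diagonal_diag, inv_diagonal]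
    exact isDiag_diagonal _

/-- `T̄`, the subgroup of all diagonal matrices contained in `O_J`. -/
def Tbar : Subgroup (GL (Fin n) F) := diagIn n F (OJ n F)

/-- `V̄ = {P_σ : σ ∘ ι = ι ∘ σ}` as a subgroup of `GL_n(F)`. -/
def Vbar : Subgroup (GL (Fin n) F) where
  carrier := {x | ∃ σ : Equiv.Perm (Fin n),
      σ * iotaPerm n = iotaPerm n * σ ∧ (x : Matrix (Fin n) (Fin n) F) = permMat n F σ}
  one_mem' := ⟨1, by simp, by simp [permMat_one]⟩
  mul_mem' := by
    rintro a b ⟨σ, hσ, ha⟩ ⟨τ, hτ, hb⟩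
    refine ⟨σ * τ, ?_, ?_⟩
    · rw [mul_assoc, hτ, ← mul_assoc, hσ, mul_assoc]
    · rw [Units.val_mul, ha, hb, permMat_mul]
  inv_mem' := by
    rintro a ⟨σ, hσ, ha⟩
    have hau : a = permGL n F σ := Units.ext ha
    exact ⟨σ⁻¹, (Commute.inv_left hσ : _), by rw [hau]; rfl⟩

/-- `W̄ := V̄ ∩ SL_n(F)`. -/
def Wbar : Subgroup (GL (Fin n) F) := Vbar n F ⊓ SLgl n F

end
noncomputable section AuxLemmas

open Matrix

variable (n : ℕ) (F : Type) [Field F]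

lemma mem_OJ_iff (x : GL (Fin n) F) :
    x ∈ OJ n F ↔ (x : Matrix (Fin n) (Fin n) F)ᵀ * Jmat n F * (x : Matrix (Fin n) (Fin n) F)
      = Jmat n F := Iff.rfl

lemma mem_SLgl_iff (x : GL (Fin n) F) :
    x ∈ SLgl n F ↔ (x : Matrix (Fin n) (Fin n) F).det = 1 := Iff.rfl

lemma mem_Tbar_iff (x : GL (Fin n) F) :
    x ∈ Tbar n F ↔ x ∈ OJ n F ∧ (x : Matrix (Fin n) (Fin n) F).IsDiag := Iff.rfl

lemma mem_Vbar_iff (x : GL (Fin n) F) :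
    x ∈ Vbar n F ↔ ∃ σ : Equiv.Perm (Fin n),
      σ * iotaPerm n = iotaPerm n * σ ∧ (x : Matrix (Fin n) (Fin n) F) = permMat n F σ :=
  Iff.rfl

lemma iota_coe (i : Fin n) : ((iotaPerm n i : Fin n) : ℕ) = n - 1 - (i : ℕ) := rfl

lemma iota_iota (i : Fin n) : iotaPerm n (iotaPerm n i) = i := by
  have := i.isLt
  apply Fin.ext
  rw [iota_coe, iota_coe]
  omega

lemma Jmat_apply (i j : Fin n) : Jmat n F i j = if j = iotaPerm n i then 1 else 0 := by
  have hi := i.isLt; have hj := j.isLt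
  show (if (i : ℕ) + (j : ℕ) + 1 = n then (1:F) else 0) = _
  by_cases h : (i : ℕ) + (j : ℕ) + 1 = n
  · rw [if_pos h, if_pos]
    apply Fin.ext
    rw [iota_coe]
    omega
  · rw [if_neg h, if_neg]
    intro he
    apply h
    have := congrArg (Fin.val) he
    rw [iota_coe] at this
    omega

lemma permMat_apply (σ : Equiv.Perm (Fin n)) (i j : Fin n) :
    permMat n F σ i j = if i = σ j then 1 else 0 := rfl

lemma entry_conj (A B : Matrix (Fin n) (Fin n) F) (σ : Equiv.Perm (Fin n))
    (hA : ∀ k i, k ≠ σ i → A k i = 0) (i j : Fin n) :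
    (Aᵀ * B * A) i j = A (σ i) i * B (σ i) (σ j) * A (σ j) j := by
  rw [mul_assoc, mul_apply, Finset.sum_eq_single (σ i)]
  · rw [transpose_apply, mul_apply, Finset.sum_eq_single (σ j)]
    · rw [mul_assoc]
    · intro m _ hm; rw [hA m j hm, mul_zero]
    · intro h; exact absurd (Finset.mem_univ _) h
  · intro k _ hk; rw [transpose_apply, hA k i hk, zero_mul]
  · intro h; exact absurd (Finset.mem_univ _) h

lemma permMat_J_permMat (σ : Equiv.Perm (Fin n))
    (hσ : ∀ i, σ (iotaPerm n i) = iotaPerm n (σ i)) :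
    (permMat n F σ)ᵀ * Jmat n F * permMat n F σ = Jmat n F := by
  ext i j
  rw [entry_conj n F _ _ σ (fun k i hki => by rw [permMat_apply, if_neg hki])]
  rw [permMat_apply, permMat_apply, if_pos rfl, if_pos rfl, one_mul, mul_one]
  rw [Jmat_apply, Jmat_apply]
  by_cases h : j = iotaPerm n i
  · rw [if_pos h, if_pos (by rw [h, hσ])]
  · rw [if_neg h, if_neg]
    intro he
    apply h
    rw [← hσ] at he
    exact σ.injective he

lemma diag_J_diag (d : Fin n → F) (hd : ∀ i, d i * d (iotaPerm n i) = 1) :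
    (diagonal d)ᵀ * Jmat n F * diagonal d = Jmat n F := by
  rw [diagonal_transpose]
  ext i j
  rw [mul_diagonal, diagonal_mul, Jmat_apply]
  by_cases h : j = iotaPerm n i
  · rw [if_pos h, mul_one, h]
    exact hd i
  · rw [if_neg h, mul_zero, zero_mul]

lemma perm_mul_diag (σ : Equiv.Perm (Fin n)) (v : Fin n → F) :
    permMat n F σ * diagonal v = diagonal (fun i => v (σ⁻¹ i)) * permMat n F σ := by
  ext i j
  by_cases h : i = σ j
  · rw [mul_diagonal, diagonal_mul, permMat_apply, if_pos h, mul_one, one_mul, h]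
    simp
  · rw [mul_diagonal, diagonal_mul, permMat_apply, if_neg h, zero_mul, mul_zero]

lemma det_diag_one (hn : n % 2 = 0) (d : Fin n → F)
    (hd : ∀ i, d i * d (iotaPerm n i) = 1) : (diagonal d).det = 1 := by
  rw [det_diagonal]
  refine Finset.prod_ninvolution (iotaPerm n) hd (fun a _ => ?_) (fun a => Finset.mem_univ _)
    (iota_iota n)
  intro h
  have h2 := congrArg Fin.val h
  rw [iota_coe] at h2
  have := a.isLt
  omega

/-- A diagonal matrix with the `O_J` pairing condition, as a unit. -/
def diagUnit (d : Fin n → F) (hd : ∀ i, d i * d (iotaPerm n i) = 1) : GL (Fin n) F :=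
  ⟨diagonal d, diagonal (fun i => d (iotaPerm n i)),
    by rw [diagonal_mul_diagonal]
       have : (fun i => d i * d (iotaPerm n i)) = fun _ => (1:F) := funext hd
       rw [this, diagonal_one],
    by rw [diagonal_mul_diagonal]
       have : (fun i => d (iotaPerm n i) * d i) = fun _ => (1:F) := by
         funext i; rw [mul_comm]; exact hd i
       rw [this, diagonal_one]⟩

lemma diagUnit_mem_Tbar (d : Fin n → F) (hd : ∀ i, d i * d (iotaPerm n i) = 1) :
    diagUnit n F d hd ∈ Tbar n F :=
  ⟨diag_J_diag n F d hd, isDiag_diagonal d⟩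

lemma permGL_inv (σ : Equiv.Perm (Fin n)) : (permGL n F σ)⁻¹ = permGL n F σ⁻¹ :=
  Units.ext rfl

lemma permGL_conj_Tbar (σ : Equiv.Perm (Fin n)) (hO : permGL n F σ ∈ OJ n F)
    (h : GL (Fin n) F) (hh : h ∈ Tbar n F) :
    permGL n F σ * h * (permGL n F σ)⁻¹ ∈ Tbar n F := by
  obtain ⟨hhO, hhD⟩ := hh
  refine ⟨mul_mem (mul_mem hO hhO) (inv_mem hO), ?_⟩
  have hval : (↑(permGL n F σ * h * (permGL n F σ)⁻¹) : Matrix (Fin n) (Fin n) F)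
      = permMat n F σ * (h : Matrix (Fin n) (Fin n) F) * permMat n F σ⁻¹ := by
    rw [Units.val_mul, Units.val_mul]; rfl
  rw [hval, ← hhD.diagonal_diag, perm_mul_diag, mul_assoc, permMat_mul, mul_inv_cancel,
    permMat_one, mul_one]
  exact isDiag_diagonal _

end AuxLemmas
noncomputable section Zeta

lemma exists_good (F : Type) [Field F] [Infinite F] (N : ℕ) :
    ∃ a : F, a ≠ 0 ∧ ∀ m, 0 < m → m ≤ N → a ^ m ≠ 1 := by
  classical
  set q : Polynomial F :=
    Polynomial.X * ∏ m ∈ Finset.range N, (Polynomial.X ^ (m + 1) - Polynomial.C 1) with hq_def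
  have hq : q ≠ 0 := by
    apply mul_ne_zero Polynomial.X_ne_zero
    rw [Finset.prod_ne_zero_iff]
    intro m _
    exact (Polynomial.monic_X_pow_sub_C (1 : F) (Nat.succ_ne_zero m)).ne_zero
  obtain ⟨a, ha⟩ := Infinite.exists_notMem_finset q.roots.toFinset
  have heval : q.eval a ≠ 0 := by
    intro h
    exact ha (Multiset.mem_toFinset.mpr ((Polynomial.mem_roots hq).mpr h))
  rw [hq_def, Polynomial.eval_mul, Polynomial.eval_X, Polynomial.eval_prod] at heval
  have ha0 : a ≠ 0 := fun h => heval (by rw [h, zero_mul])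
  refine ⟨a, ha0, ?_⟩
  intro m hm hmN h1
  apply heval
  rw [Finset.prod_eq_zero (i := m - 1) (Finset.mem_range.mpr (by omega))]
  · rw [mul_zero]
  · rw [Polynomial.eval_sub, Polynomial.eval_pow, Polynomial.eval_X, Polynomial.eval_C]
    have : m - 1 + 1 = m := by omega
    rw [this, h1, sub_self]

end Zeta
noncomputable section Regular

lemma exists_regular (F : Type) [Field F] [Infinite F] (l : ℕ) :
    ∃ t : Fin (2 * l) → F,
      (∀ i, t i * t (iotaPerm (2 * l) i) = 1) ∧ Function.Injective t := by
  obtain ⟨a, ha0, haord⟩ := exists_good F (2 * l)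
  set ζ : Fˣ := Units.mk0 a ha0 with hζ
  set g : Fin (2 * l) → ℤ :=
    fun i => if (i : ℕ) < l then ((i : ℕ) : ℤ) + 1 else ((i : ℕ) : ℤ) - 2 * l with hg
  have hgb : ∀ k : Fin (2 * l), (1 ≤ g k ∧ g k ≤ l) ∨ (-(l : ℤ) ≤ g k ∧ g k ≤ -1) := by
    intro k
    have hk := k.isLt
    rw [hg]
    dsimp only
    split_ifs with h
    · left; omega
    · right; omega
  have hzpow : ∀ m : ℕ, 0 < m → m ≤ 2 * l → ζ ^ (m : ℤ) ≠ 1 := by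
    intro m hm hmN h
    apply haord m hm hmN
    have := congrArg Units.val h
    rw [zpow_natCast, Units.val_pow_eq_pow_val] at this
    simpa [hζ] using this
  refine ⟨fun i => ((ζ ^ g i : Fˣ) : F), ?_, ?_⟩
  · intro i
    have hgi : g (iotaPerm (2 * l) i) = -g i := by
      have hi := i.isLt
      have hvi : ((iotaPerm (2 * l) i : Fin (2 * l)) : ℕ) = 2 * l - 1 - (i : ℕ) := rfl
      rw [hg]
      dsimp only
      rw [hvi]
      split_ifs with h1 h2 h2 <;> omega
    show ((ζ ^ g i : Fˣ) : F) * ((ζ ^ g (iotaPerm (2 * l) i) : Fˣ) : F) = 1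
    rw [hgi, ← Units.val_mul, ← _root_.zpow_add, add_neg_cancel, zpow_zero, Units.val_one]
  · intro i j hij
    have h1 : ζ ^ g i = ζ ^ g j := Units.ext hij
    have h2 : ζ ^ (g i - g j) = 1 := by rw [_root_.zpow_sub, h1, mul_inv_cancel]
    have hgij : g i = g j := by
      by_contra hne
      set m : ℕ := (g i - g j).natAbs with hm
      have hm0 : 0 < m := by
        rcases hgb i with ⟨h3, h4⟩ | ⟨h3, h4⟩ <;> rcases hgb j with ⟨h5, h6⟩ | ⟨h5, h6⟩ <;> omega
      have hmN : m ≤ 2 * l := by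
        rcases hgb i with ⟨h3, h4⟩ | ⟨h3, h4⟩ <;> rcases hgb j with ⟨h5, h6⟩ | ⟨h5, h6⟩ <;> omega
      apply hzpow m hm0 hmN
      rcases Int.natAbs_eq (g i - g j) with hk | hk
      · rw [← hm] at hk
        rw [← hk]
        exact h2
      · rw [← hm] at hk
        rw [hk] at h2
        rw [_root_.zpow_neg, inv_eq_one] at h2
        exact h2
    have hi := i.isLt
    have hj := j.isLt
    apply Fin.ext
    rw [hg] at hgij
    dsimp only at hgij
    split_ifs at hgij <;> omega

end Regular
/-- For `F` algebraically closed of characteristic `≠ 2` and `l ≥ 4`,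
the normalizer of `T̄` in `SO_J` is the internal semidirect product of `T̄` by `W̄`. -/
theorem normalizer_Tbar_eq_Tbar_mul_Wbar
    (F : Type) [Field F] [IsAlgClosed F] (hchar : ringChar F ≠ 2)
    (l : ℕ) (hl : 4 ≤ l) :
    Wbar (2 * l) F ≤ SOJ (2 * l) F ⊓ Subgroup.normalizer (Tbar (2 * l) F : Set (GL (Fin (2 * l)) F)) ∧
    Tbar (2 * l) F ⊓ Wbar (2 * l) F = ⊥ ∧
    ∀ x ∈ SOJ (2 * l) F ⊓ Subgroup.normalizer (Tbar (2 * l) F : Set (GL (Fin (2 * l)) F)),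
      ∃ t ∈ Tbar (2 * l) F, ∃ w ∈ Wbar (2 * l) F, x = t * w := by
  set n := 2 * l with hn_def
  have hn2 : n % 2 = 0 := by omega
  refine ⟨?_, ?_, ?_⟩
  · -- Part 1 : Wbar ≤ SOJ ⊓ normalizer Tbar
    intro w hw
    obtain ⟨hwV, hdet⟩ := Subgroup.mem_inf.mp hw
    obtain ⟨σ, hσc, hval⟩ := (mem_Vbar_iff n F w).mp hwV
    have hwu : w = permGL n F σ := Units.ext hval
    subst hwu
    have hσpt : ∀ i, σ (iotaPerm n i) = iotaPerm n (σ i) := by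
      intro i
      have h := DFunLike.congr_fun hσc i
      simpa [Equiv.Perm.mul_apply] using h
    have hO : permGL n F σ ∈ OJ n F :=
      (mem_OJ_iff n F _).mpr (permMat_J_permMat n F σ hσpt)
    rw [Subgroup.mem_inf]
    refine ⟨Subgroup.mem_inf.mpr ⟨hO, hdet⟩, ?_⟩
    rw [Subgroup.mem_normalizer_iff]
    intro h
    constructor
    · exact fun hh => permGL_conj_Tbar n F σ hO h hh
    · intro hh
      have hOinv : permGL n F σ⁻¹ ∈ OJ n F := by
        rw [← permGL_inv]; exact inv_mem hO
      have h2 := permGL_conj_Tbar n F σ⁻¹ hOinv _ hh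
      rw [← permGL_inv] at h2
      have e : (permGL n F σ)⁻¹ * (permGL n F σ * h * (permGL n F σ)⁻¹) *
          ((permGL n F σ)⁻¹)⁻¹ = h := by group
      rwa [e] at h2
  · -- Part 2 : Tbar ⊓ Wbar = ⊥
    rw [eq_bot_iff]
    intro x hx
    obtain ⟨hxT, hxW⟩ := Subgroup.mem_inf.mp hx
    obtain ⟨hxO, hxD⟩ := (mem_Tbar_iff n F x).mp hxT
    obtain ⟨hxV, hdet⟩ := Subgroup.mem_inf.mp hxW
    obtain ⟨σ, hσc, hval⟩ := (mem_Vbar_iff n F x).mp hxV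
    rw [Subgroup.mem_bot]
    have hσ1 : σ = 1 := by
      apply Equiv.ext
      intro j
      by_contra h
      have h0 := @hxD (σ j) j h
      rw [hval, permMat_apply, if_pos rfl] at h0
      exact one_ne_zero h0
    apply Units.ext
    rw [hval, hσ1, permMat_one]
    rfl
  · -- Part 3 : factorization
    intro x hx
    obtain ⟨hxS, hxN⟩ := Subgroup.mem_inf.mp hx
    obtain ⟨hxO', hxdet'⟩ := Subgroup.mem_inf.mp hxS
    have hxO : (↑x : Matrix (Fin n) (Fin n) F)ᵀ * Jmat n F * (↑x : Matrix (Fin n) (Fin n) F)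
        = Jmat n F := (mem_OJ_iff n F x).mp hxO'
    have hxdet : (↑x : Matrix (Fin n) (Fin n) F).det = 1 := (mem_SLgl_iff n F x).mp hxdet'
    obtain ⟨tF, htpair, htinj⟩ :
        ∃ t : Fin n → F, (∀ i, t i * t (iotaPerm n i) = 1) ∧ Function.Injective t :=
      exists_regular F l
    set Tu : GL (Fin n) F := diagUnit n F tF htpair with hTu_def
    have hTmem : Tu ∈ Tbar n F := diagUnit_mem_Tbar n F tF htpair
    have hS : x * Tu * x⁻¹ ∈ Tbar n F := (Subgroup.mem_normalizer_iff.mp hxN Tu).mp hTmem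
    obtain ⟨hSO, hSD⟩ := (mem_Tbar_iff n F _).mp hS
    have hmx : (↑(x * Tu * x⁻¹) : Matrix (Fin n) (Fin n) F) * (↑x : Matrix (Fin n) (Fin n) F)
        = (↑x : Matrix (Fin n) (Fin n) F) * diagonal tF := by
      have h1 : (x * Tu * x⁻¹) * x = x * Tu := by group
      have h2 := congrArg (Units.val) h1
      rw [Units.val_mul, Units.val_mul] at h2
      exact h2
    set s : Fin n → F := Matrix.diag (↑(x * Tu * x⁻¹) : Matrix (Fin n) (Fin n) F) with hs_def
    have hSA : ∀ i j, s i * (↑x : Matrix (Fin n) (Fin n) F) i j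
        = (↑x : Matrix (Fin n) (Fin n) F) i j * tF j := by
      intro i j
      have h3 : (diagonal s * (↑x : Matrix (Fin n) (Fin n) F)) i j
          = ((↑x : Matrix (Fin n) (Fin n) F) * diagonal tF) i j := by
        rw [hs_def, hSD.diagonal_diag, hmx]
      rw [diagonal_mul, mul_diagonal] at h3
      exact h3
    have hcancel : ∀ i j, (↑x : Matrix (Fin n) (Fin n) F) i j ≠ 0 → tF j = s i := by
      intro i j hj
      have h4 := hSA i j
      rw [mul_comm ((↑x : Matrix (Fin n) (Fin n) F) i j) (tF j)] at h4
      exact (mul_right_cancel₀ hj h4).symm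
    have hrow_ex : ∀ i, ∃ j, (↑x : Matrix (Fin n) (Fin n) F) i j ≠ 0 := by
      intro i
      by_contra hcon
      push_neg at hcon
      have h5 := Matrix.det_eq_zero_of_row_eq_zero i hcon
      rw [hxdet] at h5
      exact one_ne_zero h5
    choose c hc using hrow_ex
    have hcuniq : ∀ i j, (↑x : Matrix (Fin n) (Fin n) F) i j ≠ 0 → j = c i := by
      intro i j h
      exact htinj ((hcancel i j h).trans (hcancel i (c i) (hc i)).symm)
    have hcsurj : Function.Surjective c := by
      intro j
      have hcol : ∃ k, (↑x : Matrix (Fin n) (Fin n) F) k j ≠ 0 := by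
        by_contra hcon
        push_neg at hcon
        have h5 := Matrix.det_eq_zero_of_column_eq_zero j hcon
        rw [hxdet] at h5
        exact one_ne_zero h5
      obtain ⟨k, hk⟩ := hcol
      exact ⟨k, (hcuniq k j hk).symm⟩
    have hcbij : Function.Bijective c := ⟨Finite.injective_iff_surjective.mpr hcsurj, hcsurj⟩
    set e : Equiv.Perm (Fin n) := Equiv.ofBijective c hcbij with he_def
    set σ : Equiv.Perm (Fin n) := e.symm with hσ_def
    have hce : ∀ i, c i = e i := fun i => rfl
    have hAzero : ∀ k i, k ≠ σ i → (↑x : Matrix (Fin n) (Fin n) F) k i = 0 := by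
      intro k i hki
      by_contra hA
      apply hki
      have h5 : i = c k := hcuniq k i hA
      rw [h5, hce, hσ_def]
      exact (e.symm_apply_apply k).symm
    set d : Fin n → F := fun k => (↑x : Matrix (Fin n) (Fin n) F) k (c k) with hd_def
    have hAd : ∀ m, (↑x : Matrix (Fin n) (Fin n) F) (σ m) m = d (σ m) := by
      intro m
      have h5 : c (σ m) = m := by rw [hce, hσ_def]; exact e.apply_symm_apply m
      rw [hd_def]
      dsimp only
      rw [h5]
    have hAeq : (↑x : Matrix (Fin n) (Fin n) F) = diagonal d * permMat n F σ := by
      ext i j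
      rw [diagonal_mul, permMat_apply]
      by_cases h : i = σ j
      · rw [if_pos h, mul_one, h, hAd j]
      · rw [if_neg h, mul_zero]
        exact hAzero i j h
    have key : ∀ i j, (↑x : Matrix (Fin n) (Fin n) F) (σ i) i * Jmat n F (σ i) (σ j) *
        (↑x : Matrix (Fin n) (Fin n) F) (σ j) j = Jmat n F i j := by
      intro i j
      rw [← entry_conj n F _ _ σ hAzero i j, hxO]
    have hcomm : ∀ i, σ (iotaPerm n i) = iotaPerm n (σ i) := by
      intro i
      by_contra hne
      have h6 := key i (iotaPerm n i)
      rw [Jmat_apply n F i (iotaPerm n i), if_pos rfl] at h6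
      rw [Jmat_apply n F (σ i), if_neg hne] at h6
      rw [mul_zero, zero_mul] at h6
      exact zero_ne_one h6
    have hd1 : ∀ k, d k * d (iotaPerm n k) = 1 := by
      intro k
      obtain ⟨i, rfl⟩ := σ.surjective k
      have h6 := key i (iotaPerm n i)
      rw [Jmat_apply n F i (iotaPerm n i), if_pos rfl] at h6
      rw [Jmat_apply n F (σ i), if_pos (hcomm i)] at h6
      rw [mul_one] at h6
      rw [hAd i, hAd (iotaPerm n i), hcomm i] at h6
      exact h6
    have hdetD : (diagonal d).det = 1 := det_diag_one n F hn2 d hd1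
    have hdetP : (permMat n F σ).det = 1 := by
      have h7 : (↑x : Matrix (Fin n) (Fin n) F).det = (diagonal d).det * (permMat n F σ).det := by
        rw [hAeq, det_mul]
      rw [hxdet, hdetD, one_mul] at h7
      exact h7.symm
    have hσι : σ * iotaPerm n = iotaPerm n * σ := by
      apply Equiv.ext
      intro i
      rw [Equiv.Perm.mul_apply, Equiv.Perm.mul_apply, hcomm]
    refine ⟨diagUnit n F d hd1, diagUnit_mem_Tbar n F d hd1, permGL n F σ, ?_, ?_⟩
    · exact Subgroup.mem_inf.mpr ⟨(mem_Vbar_iff n F _).mpr ⟨σ, hσι, rfl⟩, hdetP⟩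
    · apply Units.ext
      rw [Units.val_mul]
      exact hAeq
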